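/- Let n ≥ 1 and ℓ ≥ 1. Let c : ℕ → ℝ be a sequence with every c_k ∈ ℤ[X_{n-1}] and c_{k+ℓ} = c_k for all k ≥ 1, and suppose the continued fraction [c₀, c₁, c₂, …] converges to X_n. Then the convergents satisfy p_{ℓ−1}² − X_n²·q_{ℓ−1}² = (−1)^ℓ. -/

import Mathlib

/-- `X n = 2 cos(2π/2^(n+2))`. -/
noncomputable def X (n : ℕ) : ℝ := 2 * Real.cos (2 * Real.pi / 2 ^ (n + 2))

/-- Convergent numerators: `cfNum c (k+1) = p_k`, with `cfNum c 0 = p_{-1} = 1`. -/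
noncomputable def cfNum (c : ℕ → ℝ) : ℕ → ℝ
  | 0 => 1
  | 1 => c 0
  | (k + 2) => c (k + 1) * cfNum c (k + 1) + cfNum c k

/-- Convergent denominators: `cfDen c (k+1) = q_k`, with `cfDen c 0 = q_{-1} = 0`. -/
noncomputable def cfDen (c : ℕ → ℝ) : ℕ → ℝ
  | 0 => 0
  | 1 => 1
  | (k + 2) => c (k + 1) * cfDen c (k + 1) + cfDen c k

/-- The continued fraction `[c₀, c₁, c₂, …]` converges to `x`. -/
def CFConv (c : ℕ → ℝ) (x : ℝ) : Prop :=
  Filter.Tendsto (fun k => cfNum c (k + 1) / cfDen c (k + 1)) Filter.atTop (nhds x)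

set_option synthInstance.maxHeartbeats 400000
set_option maxHeartbeats 1000000

open IntermediateField Module

lemma X_succ_sq (m : ℕ) : X (m + 1) ^ 2 = 2 + X m := by
  simp only [X]
  rw [show (2 * Real.pi / 2 ^ (m + 2)) = 2 * (2 * Real.pi / 2 ^ (m + 1 + 2)) by ring,
    Real.cos_two_mul]
  ring

lemma X_pos (m : ℕ) : 0 < X (m + 1) := by
  have hp := Real.pi_pos
  have h2 : (8:ℝ) ≤ 2 ^ (m + 3) := by
    calc (8:ℝ) = 2 ^ 3 := by norm_num
    _ ≤ 2 ^ (m + 3) := by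
      apply pow_le_pow_right₀ (by norm_num); omega
  have hlt : 2 * Real.pi / 2 ^ (m + 3) < Real.pi / 2 := by
    rw [div_lt_div_iff₀ (by positivity) (by norm_num)]
    nlinarith
  have hgt : (0:ℝ) < 2 * Real.pi / 2 ^ (m + 3) := by positivity
  have := Real.cos_pos_of_mem_Ioo (x := 2 * Real.pi / 2 ^ (m + 3)) ⟨by linarith, hlt⟩
  simp only [X, show m + 1 + 2 = m + 3 by ring]
  linarith

lemma X_zero : X 0 = 0 := by
  simp [X, show (2:ℝ) * Real.pi / 2 ^ 2 = Real.pi / 2 by ring, Real.cos_pi_div_two]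

noncomputable def zeta (n : ℕ) : ℂ :=
  Complex.exp (2 * Real.pi * Complex.I / ((2 : ℕ) ^ (n + 2) : ℕ))

lemma zeta_prim (n : ℕ) : IsPrimitiveRoot (zeta n) (2 ^ (n + 2)) :=
  Complex.isPrimitiveRoot_exp _ (pow_ne_zero _ two_ne_zero)

lemma zeta_ne_zero (n : ℕ) : zeta n ≠ 0 := Complex.exp_ne_zero _

lemma X_complex (n : ℕ) : ((X n : ℝ) : ℂ) = zeta n + (zeta n)⁻¹ := by
  have harg : (2 * Real.pi * Complex.I / ((2:ℕ) ^ (n + 2) : ℕ) : ℂ)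
      = ((2 * Real.pi / 2 ^ (n + 2) : ℝ) : ℂ) * Complex.I := by
    push_cast; ring
  rw [zeta, harg, ← Complex.exp_neg,
    show -(((2 * Real.pi / 2 ^ (n + 2) : ℝ) : ℂ) * Complex.I)
      = ((-(2 * Real.pi / 2 ^ (n + 2) : ℝ) : ℝ) : ℂ) * Complex.I by push_cast; ring,
    Complex.exp_mul_I, Complex.exp_mul_I]
  simp only [X, Complex.ofReal_cos, Complex.ofReal_neg, Complex.cos_neg, Complex.sin_neg]
  push_cast
  ring

lemma zeta_quadratic (n : ℕ) :
    (zeta n) ^ 2 = ((X n : ℝ) : ℂ) * zeta n + (-1) := by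
  rw [X_complex]
  field_simp [zeta_ne_zero n]
  ring

attribute [irreducible] X

lemma int_of_pow_eq_one (x : ℂ) (N : ℕ) (hN : N ≠ 0) (h : x ^ N = 1) : IsIntegral ℚ x :=
  ⟨Polynomial.X ^ N - Polynomial.C 1, Polynomial.monic_X_pow_sub_C 1 hN, by simp [h]⟩

lemma zeta_pow (n : ℕ) : zeta n ^ (2 ^ (n + 2)) = 1 := (zeta_prim n).pow_eq_one

lemma zeta_int (n : ℕ) : IsIntegral ℚ (zeta n) :=
  int_of_pow_eq_one _ _ (pow_ne_zero _ two_ne_zero) (zeta_pow n)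

lemma zeta_inv_int (n : ℕ) : IsIntegral ℚ (zeta n)⁻¹ := by
  apply int_of_pow_eq_one _ (2 ^ (n + 2)) (pow_ne_zero _ two_ne_zero)
  rw [inv_pow, zeta_pow, inv_one]

lemma Xc_int (n : ℕ) : IsIntegral ℚ ((X n : ℝ) : ℂ) := by
  rw [X_complex]; exact (zeta_int n).add (zeta_inv_int n)

lemma X_int (n : ℕ) : IsIntegral ℚ (X n) :=
  (isIntegral_algebraMap_iff (algebraMap ℝ ℂ).injective).1 (Xc_int n)

lemma finrank_zeta (n : ℕ) : finrank ℚ (ℚ⟮zeta n⟯ : IntermediateField ℚ ℂ) = 2 ^ (n + 1) := by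
  rw [IntermediateField.adjoin.finrank (zeta_int n),
    ← Polynomial.cyclotomic_eq_minpoly_rat (zeta_prim n) (by positivity),
    Polynomial.natDegree_cyclotomic, Nat.totient_prime_pow Nat.prime_two (by omega)]
  simp

lemma finrank_Xc_eq (n : ℕ) :
    finrank ℚ (ℚ⟮((X n : ℝ) : ℂ)⟯ : IntermediateField ℚ ℂ)
      = finrank ℚ (ℚ⟮X n⟯ : IntermediateField ℚ ℝ) := by
  rw [IntermediateField.adjoin.finrank (Xc_int n), IntermediateField.adjoin.finrank (X_int n)]
  congr 1
  exact minpoly.algebraMap_eq (algebraMap ℝ ℂ).injective (X n)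

section Quad

variable {E : Type*} [Field E] [Algebra ℚ E]

lemma IF_finrank_mono {E1 E2 : IntermediateField ℚ E} (h : E1 ≤ E2)
    [FiniteDimensional ℚ E2] : finrank ℚ E1 ≤ finrank ℚ E2 := by
  have : Module.Finite ℚ (Subalgebra.toSubmodule E2.toSubalgebra) := by assumption
  exact Submodule.finrank_mono (s := Subalgebra.toSubmodule E1.toSubalgebra)
    (t := Subalgebra.toSubmodule E2.toSubalgebra) h

/-- Quadratic extension step. -/
lemma quad_step (F : IntermediateField ℚ E) [FiniteDimensional ℚ F] (x a b : E)
    (ha : a ∈ F) (hb : b ∈ F) (hx : x ^ 2 = a * x + b) :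
    finrank ℚ (ℚ⟮x⟯ : IntermediateField ℚ E) ≤ 2 * finrank ℚ F := by
  set q : Polynomial F := Polynomial.X ^ 2 +
      (Polynomial.C (⟨-a, F.neg_mem ha⟩ : F) * Polynomial.X + Polynomial.C (⟨-b, F.neg_mem hb⟩ : F))
    with hq
  have hmonic : q.Monic := Polynomial.monic_X_pow_add
    (lt_of_le_of_lt Polynomial.degree_linear_le (by norm_num))
  have hroot : Polynomial.aeval x q = 0 := by
    simp only [hq, map_add, map_mul, map_pow, Polynomial.aeval_X, Polynomial.aeval_C]
    show x ^ 2 + ((algebraMap F E) ⟨-a, _⟩ * x + (algebraMap F E) ⟨-b, _⟩) = 0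
    rw [show ((algebraMap F E) ⟨-a, F.neg_mem ha⟩ : E) = -a from rfl,
      show ((algebraMap F E) ⟨-b, F.neg_mem hb⟩ : E) = -b from rfl]
    rw [hx]; ring
  have hint : IsIntegral F x := ⟨q, hmonic, hroot⟩
  have hFD : FiniteDimensional F (F⟮x⟯ : IntermediateField F E) :=
    IntermediateField.adjoin.finiteDimensional hint
  have hdeg : finrank F (F⟮x⟯ : IntermediateField F E) ≤ 2 := by
    rw [IntermediateField.adjoin.finrank hint]
    have := minpoly.min F x hmonic hroot
    have hq2 : q.degree = 2 := by
      rw [hq]; compute_degree!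
    rw [hq2] at this
    exact Polynomial.natDegree_le_iff_degree_le.2 this
  have hFD2 : FiniteDimensional ℚ ((F⟮x⟯ : IntermediateField F E).restrictScalars ℚ) := by
    have : FiniteDimensional ℚ (F⟮x⟯ : IntermediateField F E) :=
      FiniteDimensional.trans ℚ F (F⟮x⟯ : IntermediateField F E)
    exact this
  haveI := hFD2
  have hsub : (ℚ⟮x⟯ : IntermediateField ℚ E)
      ≤ (F⟮x⟯ : IntermediateField F E).restrictScalars ℚ := by
    rw [IntermediateField.adjoin_le_iff]
    intro y hy
    rw [Set.mem_singleton_iff.1 hy]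
    exact IntermediateField.mem_adjoin_simple_self F x
  refine le_trans (IF_finrank_mono hsub) ?_
  have htow := Module.finrank_mul_finrank ℚ F (F⟮x⟯ : IntermediateField F E)
  have heq : finrank ℚ ((F⟮x⟯ : IntermediateField F E).restrictScalars ℚ)
      = finrank ℚ (F⟮x⟯ : IntermediateField F E) := rfl
  rw [heq, ← htow]
  calc finrank ℚ F * finrank F (F⟮x⟯ : IntermediateField F E) ≤ finrank ℚ F * 2 :=
      Nat.mul_le_mul_left _ hdeg
    _ = 2 * finrank ℚ F := Nat.mul_comm _ _

/-- adjoin-of-member rank monotonicity, with opaque generators. -/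
lemma rank_mono_of_mem {x y : E} (hy : IsIntegral ℚ y)
    (h : x ∈ (ℚ⟮y⟯ : IntermediateField ℚ E)) :
    finrank ℚ (ℚ⟮x⟯ : IntermediateField ℚ E) ≤ finrank ℚ (ℚ⟮y⟯ : IntermediateField ℚ E) := by
  haveI : FiniteDimensional ℚ (ℚ⟮y⟯ : IntermediateField ℚ E) :=
    IntermediateField.adjoin.finiteDimensional hy
  apply IF_finrank_mono
  rw [IntermediateField.adjoin_le_iff]
  intro z hz
  rw [Set.mem_singleton_iff.1 hz]
  exact h

end Quad

/-- Upper bound for the degree of `X m`. -/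
lemma finrank_X_le (m : ℕ) : finrank ℚ (ℚ⟮X m⟯ : IntermediateField ℚ ℝ) ≤ 2 ^ m := by
  induction m with
  | zero =>
    rw [IntermediateField.adjoin.finrank (X_int 0), X_zero]
    simp [minpoly.zero]
  | succ m ih =>
    haveI : FiniteDimensional ℚ (ℚ⟮X m⟯ : IntermediateField ℚ ℝ) :=
      IntermediateField.adjoin.finiteDimensional (X_int m)
    have hs : (2 + X m : ℝ) ∈ (ℚ⟮X m⟯ : IntermediateField ℚ ℝ) := by
      have h2 : (2:ℝ) ∈ (ℚ⟮X m⟯ : IntermediateField ℚ ℝ) := by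
        rw [show (2:ℝ) = 1 + 1 by norm_num]
        exact add_mem (one_mem _) (one_mem _)
      exact add_mem h2 (IntermediateField.mem_adjoin_simple_self ℚ (X m))
    have hx : X (m+1) ^ 2 = 0 * X (m+1) + (2 + X m) := by
      rw [X_succ_sq]; ring
    have h := quad_step (ℚ⟮X m⟯ : IntermediateField ℚ ℝ) (X (m+1)) 0 (2 + X m)
      (zero_mem _) hs hx
    refine h.trans ?_
    calc 2 * finrank ℚ (ℚ⟮X m⟯ : IntermediateField ℚ ℝ) ≤ 2 * 2 ^ m :=
        Nat.mul_le_mul_left _ ih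
      _ = 2 ^ (m+1) := by ring

/-- Lower bound for the degree of `X n`. -/
lemma finrank_X_lb (n : ℕ) : 2 ^ (n + 1) ≤ 2 * finrank ℚ (ℚ⟮X n⟯ : IntermediateField ℚ ℝ) := by
  haveI : FiniteDimensional ℚ (ℚ⟮((X n : ℝ) : ℂ)⟯ : IntermediateField ℚ ℂ) :=
    IntermediateField.adjoin.finiteDimensional (Xc_int n)
  have h := quad_step (ℚ⟮((X n : ℝ) : ℂ)⟯ : IntermediateField ℚ ℂ) (zeta n)
    (((X n : ℝ) : ℂ)) (-1)
    (IntermediateField.mem_adjoin_simple_self ℚ _) (neg_mem (one_mem _)) (zeta_quadratic n)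
  rw [finrank_zeta, finrank_Xc_eq] at h
  exact h

lemma rank_contr {x y : ℝ} (hy : IsIntegral ℚ y)
    (hmem : x ∈ (ℚ⟮y⟯ : IntermediateField ℚ ℝ)) {M N : ℕ}
    (hup : finrank ℚ (ℚ⟮y⟯ : IntermediateField ℚ ℝ) ≤ N)
    (hlb : M ≤ 2 * finrank ℚ (ℚ⟮x⟯ : IntermediateField ℚ ℝ))
    (hMN : 2 * N < M) : False := by
  have h1 := rank_mono_of_mem (E := ℝ) hy hmem
  omega

/-- The key irrationality statement. -/
lemma X_notin (m : ℕ) : X (m + 1) ∉ (ℚ⟮X m⟯ : IntermediateField ℚ ℝ) := by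
  intro hmem
  refine rank_contr (X_int m) hmem (finrank_X_le m) (finrank_X_lb (m + 1)) ?_
  have hpos : 0 < (2:ℕ) ^ m := pow_pos (by norm_num) m
  omega

/-- Linear independence of `1, X (m+1)` over `ℤ[X m]`. -/
lemma X_lin_indep (m : ℕ) {A B : ℝ}
    (hA : A ∈ Algebra.adjoin ℤ ({X m} : Set ℝ))
    (hB : B ∈ Algebra.adjoin ℤ ({X m} : Set ℝ))
    (h : A + B * X (m + 1) = 0) : A = 0 ∧ B = 0 := by
  have hsub : Algebra.adjoin ℤ ({X m} : Set ℝ)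
      ≤ ((ℚ⟮X m⟯ : IntermediateField ℚ ℝ).toSubalgebra.restrictScalars ℤ) := by
    apply Algebra.adjoin_le
    intro y hy
    rw [Set.mem_singleton_iff.1 hy]
    exact IntermediateField.mem_adjoin_simple_self ℚ (X m)
  have hA' : A ∈ (ℚ⟮X m⟯ : IntermediateField ℚ ℝ) := hsub hA
  have hB' : B ∈ (ℚ⟮X m⟯ : IntermediateField ℚ ℝ) := hsub hB
  by_cases hB0 : B = 0
  · constructor
    · rw [hB0] at h; linarith
    · exact hB0
  · exfalso
    apply X_notin m
    have : X (m + 1) = (-A) / B := by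
      field_simp
      linarith
    rw [this]
    exact div_mem (neg_mem hA') hB'

/-- Determinant identity. -/
lemma cf_det (c : ℕ → ℝ) : ∀ k, cfNum c (k + 1) * cfDen c k - cfNum c k * cfDen c (k + 1)
    = (-1 : ℝ) ^ (k + 1) := by
  intro k
  induction k with
  | zero => simp [cfNum, cfDen]
  | succ k ih =>
    rw [show k + 1 + 1 = k + 2 by ring]
    simp only [cfNum, cfDen]
    rw [pow_succ]
    nlinarith [ih]

lemma cfNum_rec (c : ℕ → ℝ) (k : ℕ) :
    cfNum c (k + 2) = c (k + 1) * cfNum c (k + 1) + cfNum c k := by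
  simp [cfNum]

lemma cfDen_rec (c : ℕ → ℝ) (k : ℕ) :
    cfDen c (k + 2) = c (k + 1) * cfDen c (k + 1) + cfDen c k := by
  simp [cfDen]

lemma cfNum_one (c : ℕ → ℝ) : cfNum c 1 = c 0 := rfl
lemma cfDen_one (c : ℕ → ℝ) : cfDen c 1 = 1 := rfl
lemma cfNum_two (c : ℕ → ℝ) : cfNum c 2 = c 1 * c 0 + 1 := by
  rw [show (2:ℕ) = 0 + 2 by ring, cfNum_rec]; simp [cfNum]
lemma cfDen_two (c : ℕ → ℝ) : cfDen c 2 = c 1 := by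
  rw [show (2:ℕ) = 0 + 2 by ring, cfDen_rec]; simp [cfDen]

/-- Shift identity. -/
lemma cf_shift (c : ℕ → ℝ) (ℓ : ℕ) (hper : ∀ k, 1 ≤ k → c (k + ℓ) = c k) :
    ∀ m, cfNum c (ℓ + m + 1)
        = cfNum c ℓ * cfNum c (m + 1) + (cfNum c (ℓ + 1) - c 0 * cfNum c ℓ) * cfDen c (m + 1)
      ∧ cfDen c (ℓ + m + 1)
        = cfDen c ℓ * cfNum c (m + 1) + (cfDen c (ℓ + 1) - c 0 * cfDen c ℓ) * cfDen c (m + 1) := by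
  intro m
  induction m using Nat.twoStepInduction with
  | zero =>
    constructor <;> · simp [cfNum_one, cfDen_one]; ring
  | one =>
    have h1 : c (ℓ + 1) = c 1 := by rw [add_comm]; exact hper 1 le_rfl
    have hN : cfNum c (ℓ + 1 + 1) = c (ℓ + 1) * cfNum c (ℓ + 1) + cfNum c ℓ := cfNum_rec c ℓ
    have hD : cfDen c (ℓ + 1 + 1) = c (ℓ + 1) * cfDen c (ℓ + 1) + cfDen c ℓ := cfDen_rec c ℓ
    rw [hN, hD, h1, cfNum_two, cfDen_two]
    constructor <;> ring
  | more m ih1 ih2 =>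
    obtain ⟨ihN1, ihD1⟩ := ih1
    obtain ⟨ihN2, ihD2⟩ := ih2
    have hc : c (ℓ + m + 2) = c (m + 2) := by
      rw [show ℓ + m + 2 = (m + 2) + ℓ by ring]
      exact hper (m + 2) (by omega)
    have hN : cfNum c (ℓ + (m + 2) + 1) = c (ℓ + m + 2) * cfNum c (ℓ + m + 2) + cfNum c (ℓ + m + 1) := by
      rw [show ℓ + (m + 2) + 1 = (ℓ + m + 1) + 2 by ring, cfNum_rec,
        show ℓ + m + 1 + 1 = ℓ + m + 2 by ring]
    have hD : cfDen c (ℓ + (m + 2) + 1) = c (ℓ + m + 2) * cfDen c (ℓ + m + 2) + cfDen c (ℓ + m + 1) := by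
      rw [show ℓ + (m + 2) + 1 = (ℓ + m + 1) + 2 by ring, cfDen_rec,
        show ℓ + m + 1 + 1 = ℓ + m + 2 by ring]
    have hN' : cfNum c (m + 2 + 1) = c (m + 2) * cfNum c (m + 2) + cfNum c (m + 1) := by
      rw [show m + 2 + 1 = (m + 1) + 2 by ring, cfNum_rec, show m + 1 + 1 = m + 2 by ring]
    have hD' : cfDen c (m + 2 + 1) = c (m + 2) * cfDen c (m + 2) + cfDen c (m + 1) := by
      rw [show m + 2 + 1 = (m + 1) + 2 by ring, cfDen_rec, show m + 1 + 1 = m + 2 by ring]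
    have e1 : ℓ + (m + 1) + 1 = ℓ + m + 2 := by ring
    rw [e1] at ihN2 ihD2
    rw [hN, hD, hN', hD', hc, ihN2, ihD2, ihN1, ihD1]
    constructor <;> ring

/-- Membership of convergents in the ring. -/
lemma cf_mem (c : ℕ → ℝ) (S : Subalgebra ℤ ℝ) (hc : ∀ k, c k ∈ S) :
    ∀ k, cfNum c k ∈ S ∧ cfDen c k ∈ S := by
  intro k
  induction k using Nat.twoStepInduction with
  | zero => exact ⟨one_mem S, zero_mem S⟩
  | one => exact ⟨hc 0, one_mem S⟩
  | more k ih1 ih2 =>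
    rw [cfNum_rec, cfDen_rec]
    exact ⟨add_mem (mul_mem (hc (k+1)) ih2.1) ih1.1,
      add_mem (mul_mem (hc (k+1)) ih2.2) ih1.2⟩

open Filter in
/-- The fixed-point equation from convergence. -/
lemma cf_fixed (c : ℕ → ℝ) (x : ℝ) (hx : x ≠ 0) (hconv : CFConv c x)
    (ℓ : ℕ) (hper : ∀ k, 1 ≤ k → c (k + ℓ) = c k) :
    cfDen c ℓ * x ^ 2 + (cfDen c (ℓ + 1) - c 0 * cfDen c ℓ) * x
      - cfNum c ℓ * x - (cfNum c (ℓ + 1) - c 0 * cfNum c ℓ) = 0 := by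
  set a := cfNum c ℓ
  set b := cfNum c (ℓ + 1) - c 0 * cfNum c ℓ
  set a' := cfDen c ℓ
  set b' := cfDen c (ℓ + 1) - c 0 * cfDen c ℓ
  set f : ℕ → ℝ := fun k => cfNum c (k + 1) / cfDen c (k + 1) with hf
  have hconv' : Tendsto f atTop (nhds x) := hconv
  have hshift : Tendsto (fun m => f (m + ℓ)) atTop (nhds x) :=
    hconv'.comp (tendsto_add_atTop_nat ℓ)
  have hne : ∀ᶠ m in atTop, f m ≠ 0 := hconv'.eventually_ne hx
  have hne' : ∀ᶠ m in atTop, f (m + ℓ) ≠ 0 := (tendsto_add_atTop_nat ℓ).eventually hne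
  set G : ℕ → ℝ := fun m => a' * (f m * f (m + ℓ)) + b' * f (m + ℓ) - a * f m - b with hG
  have hGlim : Tendsto G atTop (nhds (a' * (x * x) + b' * x - a * x - b)) := by
    apply Tendsto.sub
    apply Tendsto.sub
    apply Tendsto.add
    · exact (tendsto_const_nhds.mul (hconv'.mul hshift))
    · exact tendsto_const_nhds.mul hshift
    · exact tendsto_const_nhds.mul hconv'
    · exact tendsto_const_nhds
  have hG0 : ∀ᶠ m in atTop, G m = 0 := by
    filter_upwards [hne, hne'] with m h1 h2
    have hq : cfDen c (m + 1) ≠ 0 := by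
      intro h; apply h1; simp [hf, h]
    have hq' : cfDen c (m + ℓ + 1) ≠ 0 := by
      intro h; apply h2; simp [hf, h]
    obtain ⟨hsN, hsD⟩ := cf_shift c ℓ hper m
    rw [show ℓ + m + 1 = m + ℓ + 1 by ring] at hsN hsD
    simp only [hG, hf]
    rw [div_mul_div_comm]
    field_simp
    rw [hsN, hsD]
    ring
  have : a' * (x * x) + b' * x - a * x - b = 0 := by
    have h2 : Tendsto G atTop (nhds 0) := by
      rw [Filter.tendsto_congr' (hG0.mono fun m hm => hm)]
      exact tendsto_const_nhds
    exact tendsto_nhds_unique hGlim h2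
  nlinarith [this]

theorem stmt1 (n ℓ : ℕ) (hn : 1 ≤ n) (hℓ : 1 ≤ ℓ) (c : ℕ → ℝ)
    (hc : ∀ k, c k ∈ Algebra.adjoin ℤ ({X (n - 1)} : Set ℝ))
    (hper : ∀ k, 1 ≤ k → c (k + ℓ) = c k)
    (hconv : CFConv c (X n)) :
    cfNum c ℓ ^ 2 - X n ^ 2 * cfDen c ℓ ^ 2 = (-1 : ℝ) ^ ℓ := by
  obtain ⟨m, rfl⟩ : ∃ m, n = m + 1 := ⟨n - 1, by omega⟩
  simp only [Nat.add_sub_cancel] at hc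
  set S := Algebra.adjoin ℤ ({X m} : Set ℝ) with hS
  have hx0 : X (m + 1) ≠ 0 := ne_of_gt (X_pos m)
  have hfix := cf_fixed c (X (m + 1)) hx0 hconv ℓ hper
  set a := cfNum c ℓ with ha
  set a' := cfDen c ℓ with ha'
  set p := cfNum c (ℓ + 1) with hp
  set q := cfDen c (ℓ + 1) with hq
  have hsq := X_succ_sq m
  -- linear relation
  have hA0 : (a' * (2 + X m) - (p - c 0 * a)) + (q - c 0 * a' - a) * X (m + 1) = 0 := by
    linear_combination hfix - a' * hsq
  -- memberships
  have hXm : X m ∈ S := Algebra.subset_adjoin (Set.mem_singleton _)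
  have h2S : (2 : ℝ) ∈ S := by
    rw [show (2:ℝ) = 1 + 1 by norm_num]; exact add_mem (one_mem _) (one_mem _)
  have hmem := cf_mem c S hc
  have hAmem : a' * (2 + X m) - (p - c 0 * a) ∈ S := by
    refine sub_mem (mul_mem (hmem ℓ).2 (add_mem h2S hXm)) (sub_mem (hmem (ℓ+1)).1
      (mul_mem (hc 0) (hmem ℓ).1))
  have hBmem : q - c 0 * a' - a ∈ S := by
    refine sub_mem (sub_mem (hmem (ℓ+1)).2 (mul_mem (hc 0) (hmem ℓ).2)) (hmem ℓ).1
  obtain ⟨hA, hB⟩ := X_lin_indep m hAmem hBmem hA0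
  have hdet := cf_det c ℓ
  rw [← ha, ← ha', ← hp, ← hq] at hdet
  -- conclude
  have hq' : q = a + c 0 * a' := by linarith
  have hp' : p = a' * X (m + 1) ^ 2 + c 0 * a := by
    rw [hsq]; linarith
  rw [hp', hq'] at hdet
  rw [pow_succ] at hdet
  linear_combination -hdet
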